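/- The intersection axiom holds for strictly positive distributions: if P is strictly positive and X ⊥⊥ Y | (Z ∪ W) and X ⊥⊥ W | (Z ∪ Y) for disjoint sets of variables, then X ⊥⊥ (Y ∪ W) | Z. -/

import Mathlib

open Finset

/-- Intersection axiom for strictly positive distributions.  Variables
X, Y, Z, W take values in finite types `A`, `B`, `C`, `D`, with strictly
positive joint distribution `p`.  If `X ⊥⊥ Y | (Z ∪ W)` and `X ⊥⊥ W | (Z ∪ Y)`
then `X ⊥⊥ (Y ∪ W) | Z`. -/
theorem graphoid_intersection
    {A B C D : Type*} [Fintype A] [Fintype B] [Fintype C] [Fintype D]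
    [Nonempty A] [Nonempty B] [Nonempty C] [Nonempty D]
    (p : A → B → C → D → ℝ)
    (hpos : ∀ a b c d, 0 < p a b c d)
    (hp1 : ∑ a, ∑ b, ∑ c, ∑ d, p a b c d = 1)
    -- X ⊥⊥ Y | (Z ∪ W)
    (h1 : ∀ a b c d,
      p a b c d / (∑ a', ∑ b', p a' b' c d) =
        ((∑ b', p a b' c d) / (∑ a', ∑ b', p a' b' c d)) *
        ((∑ a', p a' b c d) / (∑ a', ∑ b', p a' b' c d)))
    -- X ⊥⊥ W | (Z ∪ Y)
    (h2 : ∀ a b c d,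
      p a b c d / (∑ a', ∑ d', p a' b c d') =
        ((∑ d', p a b c d') / (∑ a', ∑ d', p a' b c d')) *
        ((∑ a', p a' b c d) / (∑ a', ∑ d', p a' b c d'))) :
    -- X ⊥⊥ (Y ∪ W) | Z
    ∀ a b c d,
      p a b c d / (∑ a', ∑ b', ∑ d', p a' b' c d') =
        ((∑ b', ∑ d', p a b' c d') / (∑ a', ∑ b', ∑ d', p a' b' c d')) *
        ((∑ a', p a' b c d) / (∑ a', ∑ b', ∑ d', p a' b' c d')) := by
  intro a b c d
  obtain ⟨b0⟩ := ‹Nonempty B›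
  -- positivity of various sums
  have hA : ∀ (b' : B) (c' : C) (d' : D), 0 < ∑ a', p a' b' c' d' := fun b' c' d' =>
    Finset.sum_pos (fun a' _ => hpos a' b' c' d') Finset.univ_nonempty
  have hT1 : ∀ (c' : C) (d' : D), 0 < ∑ a', ∑ b', p a' b' c' d' := fun c' d' =>
    Finset.sum_pos (fun a' _ => Finset.sum_pos (fun b' _ => hpos a' b' c' d')
      Finset.univ_nonempty) Finset.univ_nonempty
  have hT2 : ∀ (b' : B) (c' : C), 0 < ∑ a', ∑ d', p a' b' c' d' := fun b' c' =>
    Finset.sum_pos (fun a' _ => Finset.sum_pos (fun d' _ => hpos a' b' c' d')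
      Finset.univ_nonempty) Finset.univ_nonempty
  -- clear denominators in the hypotheses
  have e1 : ∀ (a' : A) (b' : B) (d' : D),
      p a' b' c d' * (∑ a'', ∑ b'', p a'' b'' c d') =
        (∑ b'', p a' b'' c d') * (∑ a'', p a'' b' c d') := by
    intro a' b' d'
    have h := h1 a' b' c d'
    have hT := (hT1 c d').ne'
    field_simp at h
    exact mul_right_cancel₀ hT (by linear_combination h * (∑ a'', ∑ b'', p a'' b'' c d'))
  have e2 : ∀ (a' : A) (b' : B) (d' : D),
      p a' b' c d' * (∑ a'', ∑ d'', p a'' b' c d'') =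
        (∑ d'', p a' b' c d'') * (∑ a'', p a'' b' c d') := by
    intro a' b' d'
    have h := h2 a' b' c d'
    have hT := (hT2 b' c).ne'
    field_simp at h
    exact mul_right_cancel₀ hT (by linear_combination h * (∑ a'', ∑ d'', p a'' b' c d''))
  -- the factorization function
  set u : A → ℝ := fun a' => (∑ d', p a' b0 c d') / (∑ a'', ∑ d', p a'' b0 c d') with hu
  have hfac : ∀ (a' : A) (b' : B) (d' : D),
      p a' b' c d' = u a' * ∑ a'', p a'' b' c d' := by
    intro a' b' d'
    -- first: p a' b' c d' * A(b0,d') = p a' b0 c d' * A(b',d')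
    have cross : p a' b' c d' * (∑ a'', p a'' b0 c d') =
        p a' b0 c d' * (∑ a'', p a'' b' c d') := by
      have k1 := e1 a' b' d'
      have k0 := e1 a' b0 d'
      have hT := (hT1 c d').ne'
      apply mul_left_cancel₀ hT
      linear_combination (∑ a'', p a'' b0 c d') * k1 - (∑ a'', p a'' b' c d') * k0
    -- second: p a' b0 c d' = u a' * A(b0,d')
    have base : p a' b0 c d' = u a' * (∑ a'', p a'' b0 c d') := by
      have k2 := e2 a' b0 d'
      have hT := (hT2 b0 c).ne'
      simp only [hu]
      rw [div_mul_eq_mul_div, eq_div_iff hT]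
      linear_combination k2
    have hA0 := (hA b0 c d').ne'
    have : p a' b' c d' * (∑ a'', p a'' b0 c d') =
        u a' * (∑ a'', p a'' b' c d') * (∑ a'', p a'' b0 c d') := by
      rw [cross, base]; ring
    exact mul_right_cancel₀ hA0 this
  -- sum of u over a' is 1
  have husum : ∑ a', u a' = 1 := by
    simp only [hu]
    rw [← Finset.sum_div]
    exact div_self (hT2 b0 c).ne'
  -- rewrite the three sums in the goal
  have hBD : (∑ b', ∑ d', p a b' c d') = u a * ∑ b', ∑ d', ∑ a', p a' b' c d' := by
    rw [Finset.mul_sum]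
    refine Finset.sum_congr rfl fun b' _ => ?_
    rw [Finset.mul_sum]
    exact Finset.sum_congr rfl fun d' _ => hfac a b' d'
  have hTot : (∑ a', ∑ b', ∑ d', p a' b' c d') = ∑ b', ∑ d', ∑ a', p a' b' c d' := by
    rw [Finset.sum_comm]
    refine Finset.sum_congr rfl fun b' _ => Finset.sum_comm
  have hV : 0 < ∑ b', ∑ d', ∑ a', p a' b' c d' :=
    Finset.sum_pos (fun b' _ => Finset.sum_pos (fun d' _ => hA b' c d')
      Finset.univ_nonempty) Finset.univ_nonempty
  have hAsum : (∑ a', p a' b c d) = ∑ a', p a' b c d := rfl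
  rw [hfac a b d, hBD, hTot]
  have hVne := hV.ne'
  have hAne := (hA b c d).ne'
  field_simp
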